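/- Let X, Y be finite sets, p_X a pmf on X, and V, Ṽ conditional pmfs from X to Y with |p_X(x)·Ṽ(y|x) - p_X(x)·V(y|x)| ≤ ξ for all (x,y), where 0 < ξ ≤ 1/(|X|·e). Let p_Y(y) = ∑_x p_X(x)V(y|x) and p̃_Y(y) = ∑_x p_X(x)Ṽ(y|x). Then |D(p_X·V ‖ p_X × p_Y) - D(p_X·Ṽ ‖ p_X × p̃_Y)| ≤ ξ·|X|·|Y|·(log(1/ξ) + log(1/(ξ·|X|))). -/

import Mathlib

open Finset

/-- monotonicity of `-t log t` on `(0, e⁻¹]` -/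
lemma neg_mul_log_mono {t δ : ℝ} (ht : 0 < t) (htδ : t ≤ δ) (hδ : δ ≤ Real.exp (-1)) :
    -(t * Real.log t) ≤ -(δ * Real.log δ) := by
  have hδ0 : 0 < δ := lt_of_lt_of_le ht htδ
  have h1 : Real.log (δ / t) ≤ δ / t - 1 := Real.log_le_sub_one_of_pos (by positivity)
  have h2 : Real.log (δ / t) = Real.log δ - Real.log t :=
    Real.log_div (ne_of_gt hδ0) (ne_of_gt ht)
  have h3 : Real.log δ ≤ -1 := by
    calc Real.log δ ≤ Real.log (Real.exp (-1)) := Real.log_le_log hδ0 hδ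
    _ = -1 := Real.log_exp _
  have h4 : t * (Real.log δ - Real.log t) ≤ δ - t := by
    have := mul_le_mul_of_nonneg_left h1 ht.le
    rw [h2] at this
    calc t * (Real.log δ - Real.log t) ≤ t * (δ / t - 1) := this
    _ = δ - t := by field_simp
  nlinarith [mul_nonneg (sub_nonneg.2 htδ) (by linarith : (0:ℝ) ≤ -Real.log δ - 1)]

lemma key_half {a b δ : ℝ} (ha0 : 0 ≤ a) (hab : a ≤ b) (hb1 : b ≤ 1) (hd : b - a ≤ δ)
    (hδ0 : 0 < δ) (hδ : δ ≤ Real.exp (-1)) :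
    |a * Real.log a - b * Real.log b| ≤ -(δ * Real.log δ) := by
  have hδ1 : Real.log δ ≤ -1 := by
    calc Real.log δ ≤ Real.log (Real.exp (-1)) := Real.log_le_log hδ0 hδ
    _ = -1 := Real.log_exp _
  have hrhs : 0 ≤ -(δ * Real.log δ) := by nlinarith
  rcases eq_or_lt_of_le hab with h | h
  · rw [h]; simpa using hrhs
  set t := b - a with htdef
  have ht0 : 0 < t := sub_pos.2 h
  have hb0 : 0 < b := lt_of_le_of_lt ha0 h
  have htb : t ≤ b := by simp [htdef]; linarith
  have hbt : b = a + t := by ring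
  have htδe : t ≤ Real.exp (-1) := le_trans hd hδ
  have hltb : Real.log t ≤ Real.log b := Real.log_le_log ht0 htb
  have hlogb : Real.log b ≤ 0 := Real.log_nonpos hb0.le hb1
  have hlogt : Real.log t ≤ -1 := by
    calc Real.log t ≤ Real.log (Real.exp (-1)) := Real.log_le_log ht0 htδe
    _ = -1 := Real.log_exp _
  have htlt : t ≤ -(t * Real.log t) := by nlinarith
  -- upper: a log a - b log b ≤ -(t log t)
  have hup : a * Real.log a - b * Real.log b ≤ -(t * Real.log t) := by
    rcases eq_or_lt_of_le ha0 with ha | ha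
    · have hbt' : b = t := by simp [htdef, ← ha]
      rw [← ha, hbt']; simp
    · have hlab : Real.log a ≤ Real.log b := Real.log_le_log ha (by linarith)
      have h1 : a * Real.log a ≤ a * Real.log b := mul_le_mul_of_nonneg_left hlab ha0
      have h2 : t * Real.log t ≤ t * Real.log b := mul_le_mul_of_nonneg_left hltb ht0.le
      have : b * Real.log b = a * Real.log b + t * Real.log b := by rw [hbt]; ring
      linarith
  -- lower: b log b - a log a ≤ t
  have hdn : b * Real.log b - a * Real.log a ≤ t := by
    rcases eq_or_lt_of_le ha0 with ha | ha
    · rw [← ha]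
      have := mul_nonpos_of_nonneg_of_nonpos hb0.le hlogb
      simp only [zero_mul, sub_zero, mul_zero]
      linarith
    · have h1 : Real.log (b / a) ≤ b / a - 1 := Real.log_le_sub_one_of_pos (by positivity)
      have h2 : Real.log (b / a) = Real.log b - Real.log a :=
        Real.log_div (ne_of_gt hb0) (ne_of_gt ha)
      have h3 : a * (Real.log b - Real.log a) ≤ t := by
        have := mul_le_mul_of_nonneg_left h1 ha.le
        rw [h2] at this
        calc a * (Real.log b - Real.log a) ≤ a * (b / a - 1) := this
        _ = b - a := by field_simp
        _ = t := rfl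
      have h4 : t * Real.log b ≤ 0 := mul_nonpos_of_nonneg_of_nonpos ht0.le hlogb
      have : b * Real.log b = a * Real.log b + t * Real.log b := by rw [hbt]; ring
      nlinarith
  have hmono : -(t * Real.log t) ≤ -(δ * Real.log δ) := neg_mul_log_mono ht0 hd hδ
  rw [abs_le]
  constructor <;> nlinarith

lemma key {a b δ : ℝ} (ha0 : 0 ≤ a) (ha1 : a ≤ 1) (hb0 : 0 ≤ b) (hb1 : b ≤ 1)
    (hab : |a - b| ≤ δ) (hδ0 : 0 < δ) (hδ : δ ≤ Real.exp (-1)) :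
    |a * Real.log a - b * Real.log b| ≤ -(δ * Real.log δ) := by
  rcases le_total a b with h | h
  · have hd : b - a ≤ δ := by
      rw [abs_sub_comm, abs_of_nonneg (sub_nonneg.2 h)] at hab; exact hab
    exact key_half ha0 h hb1 hd hδ0 hδ
  · have hd : a - b ≤ δ := by
      rw [abs_of_nonneg (sub_nonneg.2 h)] at hab; exact hab
    rw [abs_sub_comm]
    exact key_half hb0 h ha1 hd hδ0 hδ

lemma decomp {X Y : Type*} [Fintype X] [Fintype Y] (pX : X → ℝ) (V : X → Y → ℝ)
    (hpX0 : ∀ x, 0 ≤ pX x) (hV0 : ∀ x y, 0 ≤ V x y) (hVsum : ∀ x, ∑ y, V x y = 1) :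
    ∑ x, ∑ y, pX x * V x y * Real.log ((pX x * V x y) / (pX x * ∑ x', pX x' * V x' y))
      = (∑ x, ∑ y, pX x * V x y * Real.log (pX x * V x y))
        - (∑ x, pX x * Real.log (pX x))
        - (∑ y, (∑ x, pX x * V x y) * Real.log (∑ x, pX x * V x y)) := by
  have step : ∀ x y, pX x * V x y * Real.log ((pX x * V x y) / (pX x * ∑ x', pX x' * V x' y))
      = pX x * V x y * Real.log (pX x * V x y)
        - pX x * V x y * Real.log (pX x)
        - pX x * V x y * Real.log (∑ x', pX x' * V x' y) := by
    intro x y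
    rcases eq_or_lt_of_le (mul_nonneg (hpX0 x) (hV0 x y)) with h | h
    · rw [← h]; simp
    · have hpx : 0 < pX x := by
        rcases mul_pos_iff.mp h with ⟨h1, _⟩ | ⟨h1, h2⟩
        · exact h1
        · exact absurd (hV0 x y) (not_le.2 h2)
      have hpY : 0 < ∑ x', pX x' * V x' y :=
        lt_of_lt_of_le h (Finset.single_le_sum
          (fun i _ => mul_nonneg (hpX0 i) (hV0 i y)) (Finset.mem_univ x))
      rw [Real.log_div (ne_of_gt h) (by positivity),
        Real.log_mul (ne_of_gt hpx) (ne_of_gt hpY)]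
      ring
  simp_rw [step]
  have hB : ∀ x, ∑ y, pX x * V x y * Real.log (pX x) = pX x * Real.log (pX x) := by
    intro x
    rw [show (∑ y, pX x * V x y * Real.log (pX x))
        = (∑ y, V x y) * (pX x * Real.log (pX x)) from by
      rw [Finset.sum_mul]; exact Finset.sum_congr rfl fun y _ => by ring, hVsum, one_mul]
  have hC : (∑ x, ∑ y, pX x * V x y * Real.log (∑ x', pX x' * V x' y))
      = ∑ y, (∑ x, pX x * V x y) * Real.log (∑ x, pX x * V x y) := by
    rw [Finset.sum_comm]
    exact Finset.sum_congr rfl fun y _ => by rw [Finset.sum_mul]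
  simp_rw [Finset.sum_sub_distrib]
  rw [hC]
  simp_rw [hB]

/-- Continuity of mutual information in the channel (Lemma 6, part 1): if
`|p_X(x)·Ṽ(y|x) - p_X(x)·V(y|x)| ≤ ξ` for all `(x,y)`, with
`0 < ξ ≤ 1/(|X|·e)`, then the mutual informations
`D(p_X·V ‖ p_X × p_Y)` and `D(p_X·Ṽ ‖ p_X × p̃_Y)` differ by at most
`ξ·|X|·|Y|·(log(1/ξ) + log(1/(ξ·|X|)))`. -/
theorem stmt10 {X Y : Type*} [Fintype X] [Fintype Y] (ξ : ℝ)
    (hξ0 : 0 < ξ) (hξ1 : ξ ≤ 1 / ((Fintype.card X : ℝ) * Real.exp 1))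
    (pX : X → ℝ) (hpX0 : ∀ x, 0 ≤ pX x) (hpX1 : ∑ x, pX x = 1)
    (V Vt : X → Y → ℝ)
    (hV : ∀ x, (∀ y, 0 ≤ V x y) ∧ ∑ y, V x y = 1)
    (hVt : ∀ x, (∀ y, 0 ≤ Vt x y) ∧ ∑ y, Vt x y = 1)
    (hclose : ∀ x y, |pX x * Vt x y - pX x * V x y| ≤ ξ) :
    |(∑ x, ∑ y, pX x * V x y *
        Real.log ((pX x * V x y) / (pX x * ∑ x', pX x' * V x' y))) -
      ∑ x, ∑ y, pX x * Vt x y *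
        Real.log ((pX x * Vt x y) / (pX x * ∑ x', pX x' * Vt x' y))| ≤
      ξ * (Fintype.card X : ℝ) * (Fintype.card Y : ℝ) *
        (Real.log (1/ξ) + Real.log (1/(ξ * (Fintype.card X : ℝ)))) := by
  classical
  have hV0 : ∀ x y, 0 ≤ V x y := fun x => (hV x).1
  have hVs : ∀ x, ∑ y, V x y = 1 := fun x => (hV x).2
  have hVt0 : ∀ x y, 0 ≤ Vt x y := fun x => (hVt x).1
  have hVts : ∀ x, ∑ y, Vt x y = 1 := fun x => (hVt x).2
  have hcX : 0 < (Fintype.card X : ℝ) := by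
    rcases Nat.eq_zero_or_pos (Fintype.card X) with h | h
    · rw [h] at hξ1; norm_num at hξ1; linarith
    · exact_mod_cast h
  have hc1 : (1:ℝ) ≤ (Fintype.card X : ℝ) := by
    have : (1:ℕ) ≤ Fintype.card X := by exact_mod_cast hcX
    exact_mod_cast this
  have hexp : 0 < Real.exp 1 := Real.exp_pos 1
  have hξX : ξ * (Fintype.card X : ℝ) ≤ Real.exp (-1) := by
    have h2 : (1 / ((Fintype.card X : ℝ) * Real.exp 1)) * (Fintype.card X : ℝ)
        = (Real.exp 1)⁻¹ := by field_simp
    have h3 := mul_le_mul_of_nonneg_right hξ1 hcX.le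
    rw [h2] at h3
    rw [Real.exp_neg]
    exact h3
  have hξe : ξ ≤ Real.exp (-1) := by nlinarith
  have hξXpos : 0 < ξ * (Fintype.card X : ℝ) := mul_pos hξ0 hcX
  -- entries in [0,1]
  have hp1 : ∀ x, pX x ≤ 1 := fun x =>
    hpX1 ▸ Finset.single_le_sum (fun i _ => hpX0 i) (Finset.mem_univ x)
  have hV1 : ∀ x y, V x y ≤ 1 := fun x y =>
    (hVs x) ▸ Finset.single_le_sum (fun i _ => hV0 x i) (Finset.mem_univ y)
  have hVt1 : ∀ x y, Vt x y ≤ 1 := fun x y =>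
    (hVts x) ▸ Finset.single_le_sum (fun i _ => hVt0 x i) (Finset.mem_univ y)
  have hq01 : ∀ x y, 0 ≤ pX x * V x y ∧ pX x * V x y ≤ 1 := fun x y =>
    ⟨mul_nonneg (hpX0 x) (hV0 x y),
      le_trans (mul_le_mul_of_nonneg_left (hV1 x y) (hpX0 x)) (by simpa using hp1 x)⟩
  have hqt01 : ∀ x y, 0 ≤ pX x * Vt x y ∧ pX x * Vt x y ≤ 1 := fun x y =>
    ⟨mul_nonneg (hpX0 x) (hVt0 x y),
      le_trans (mul_le_mul_of_nonneg_left (hVt1 x y) (hpX0 x)) (by simpa using hp1 x)⟩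
  have hpY01 : ∀ y, 0 ≤ ∑ x, pX x * V x y ∧ (∑ x, pX x * V x y) ≤ 1 := fun y =>
    ⟨Finset.sum_nonneg fun i _ => (hq01 i y).1, by
      calc (∑ x, pX x * V x y) ≤ ∑ x, pX x :=
        Finset.sum_le_sum fun i _ =>
          le_trans (mul_le_mul_of_nonneg_left (hV1 i y) (hpX0 i)) (by simp)
      _ = 1 := hpX1⟩
  have hpYt01 : ∀ y, 0 ≤ ∑ x, pX x * Vt x y ∧ (∑ x, pX x * Vt x y) ≤ 1 := fun y =>
    ⟨Finset.sum_nonneg fun i _ => (hqt01 i y).1, by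
      calc (∑ x, pX x * Vt x y) ≤ ∑ x, pX x :=
        Finset.sum_le_sum fun i _ =>
          le_trans (mul_le_mul_of_nonneg_left (hVt1 i y) (hpX0 i)) (by simp)
      _ = 1 := hpX1⟩
  rw [decomp pX V hpX0 hV0 hVs, decomp pX Vt hpX0 hVt0 hVts]
  set A1 := ∑ x, ∑ y, pX x * V x y * Real.log (pX x * V x y) with hA1
  set A2 := ∑ x, ∑ y, pX x * Vt x y * Real.log (pX x * Vt x y) with hA2
  set P := ∑ x, pX x * Real.log (pX x) with hP
  set C1 := ∑ y, (∑ x, pX x * V x y) * Real.log (∑ x, pX x * V x y) with hC1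
  set C2 := ∑ y, (∑ x, pX x * Vt x y) * Real.log (∑ x, pX x * Vt x y) with hC2
  have habs : |(A1 - P - C1) - (A2 - P - C2)| ≤ |A1 - A2| + |C1 - C2| := by
    have h : (A1 - P - C1) - (A2 - P - C2) = (A1 - A2) - (C1 - C2) := by ring
    rw [h]
    exact abs_sub _ _
  have hA : |A1 - A2| ≤ (Fintype.card X : ℝ) * (Fintype.card Y : ℝ) * (-(ξ * Real.log ξ)) := by
    have h : A1 - A2 = ∑ x, ∑ y,
        (pX x * V x y * Real.log (pX x * V x y)
          - pX x * Vt x y * Real.log (pX x * Vt x y)) := by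
      rw [hA1, hA2, ← Finset.sum_sub_distrib]
      exact Finset.sum_congr rfl fun x _ => (Finset.sum_sub_distrib _ _).symm
    rw [h]
    refine le_trans (Finset.abs_sum_le_sum_abs _ _) ?_
    refine le_trans (Finset.sum_le_sum fun x _ => Finset.abs_sum_le_sum_abs _ _) ?_
    have hterm : ∀ x y, |pX x * V x y * Real.log (pX x * V x y)
        - pX x * Vt x y * Real.log (pX x * Vt x y)| ≤ -(ξ * Real.log ξ) := by
      intro x y
      refine key (hq01 x y).1 (hq01 x y).2 (hqt01 x y).1 (hqt01 x y).2 ?_ hξ0 hξe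
      rw [abs_sub_comm]; exact hclose x y
    refine le_trans (Finset.sum_le_sum fun x _ =>
      Finset.sum_le_sum fun y _ => hterm x y) (le_of_eq ?_)
    simp [Finset.sum_const, Finset.card_univ, nsmul_eq_mul]
    ring
  have hC : |C1 - C2| ≤ (Fintype.card Y : ℝ)
      * (-((ξ * (Fintype.card X : ℝ)) * Real.log (ξ * (Fintype.card X : ℝ)))) := by
    have h : C1 - C2 = ∑ y, ((∑ x, pX x * V x y) * Real.log (∑ x, pX x * V x y)
        - (∑ x, pX x * Vt x y) * Real.log (∑ x, pX x * Vt x y)) := by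
      rw [hC1, hC2, ← Finset.sum_sub_distrib]
    rw [h]
    refine le_trans (Finset.abs_sum_le_sum_abs _ _) ?_
    have hterm : ∀ y, |(∑ x, pX x * V x y) * Real.log (∑ x, pX x * V x y)
        - (∑ x, pX x * Vt x y) * Real.log (∑ x, pX x * Vt x y)|
        ≤ -((ξ * (Fintype.card X : ℝ)) * Real.log (ξ * (Fintype.card X : ℝ))) := by
      intro y
      refine key (hpY01 y).1 (hpY01 y).2 (hpYt01 y).1 (hpYt01 y).2 ?_ hξXpos hξX
      have h1 : (∑ x, pX x * V x y) - (∑ x, pX x * Vt x y)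
          = ∑ x, (pX x * V x y - pX x * Vt x y) := (Finset.sum_sub_distrib _ _).symm
      rw [h1]
      refine le_trans (Finset.abs_sum_le_sum_abs _ _) ?_
      have : ∀ x, |pX x * V x y - pX x * Vt x y| ≤ ξ := fun x => by
        rw [abs_sub_comm]; exact hclose x y
      refine le_trans (Finset.sum_le_sum fun i _ => this i) (le_of_eq ?_)
      simp [Finset.sum_const, Finset.card_univ, nsmul_eq_mul]
      ring
    refine le_trans (Finset.sum_le_sum fun y _ => hterm y) (le_of_eq ?_)
    simp [Finset.sum_const, Finset.card_univ, nsmul_eq_mul]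
  have hlog1 : Real.log (1/ξ) = -Real.log ξ := by rw [one_div, Real.log_inv]
  have hlog2 : Real.log (1/(ξ * (Fintype.card X : ℝ)))
      = -Real.log (ξ * (Fintype.card X : ℝ)) := by rw [one_div, Real.log_inv]
  have hrhs : ξ * (Fintype.card X : ℝ) * (Fintype.card Y : ℝ)
        * (Real.log (1/ξ) + Real.log (1/(ξ * (Fintype.card X : ℝ))))
      = (Fintype.card X : ℝ) * (Fintype.card Y : ℝ) * (-(ξ * Real.log ξ))
        + (Fintype.card Y : ℝ)
          * (-((ξ * (Fintype.card X : ℝ)) * Real.log (ξ * (Fintype.card X : ℝ)))) := by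
    rw [hlog1, hlog2]; ring
  rw [hrhs]
  linarith
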